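/- Let G ⊊ ℝⁿ be a proper subdomain, z ∈ G with d(z) = dist(z, ∂G) > 0, and 0 < λ < 1. Then for all x, y ∈ 𝔹ⁿ(z, λ·d(z)), j_G(x,y) ≤ (2/(1−λ)) · p_G(x,y). -/

import Mathlib

open Metric Set

/-- The triangular ratio metric `s_G(x,y) = sup_{z ∈ ∂G} |x-y|/(|x-z|+|z-y|)`. -/
noncomputable def triangularRatio {n : ℕ} (G : Set (EuclideanSpace ℝ (Fin n)))
    (x y : EuclideanSpace ℝ (Fin n)) : ℝ :=
  ⨆ z : frontier G, dist x y / (dist x z.1 + dist z.1 y)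

/-- Distance to the boundary `d_G(x) = dist(x, ∂G)`. -/
noncomputable def distBd {n : ℕ} (G : Set (EuclideanSpace ℝ (Fin n)))
    (x : EuclideanSpace ℝ (Fin n)) : ℝ :=
  Metric.infDist x (frontier G)

/-- The distance ratio metric `j_G(x,y) = log(1 + |x-y|/min{d_G(x), d_G(y)})`. -/
noncomputable def distRatio {n : ℕ} (G : Set (EuclideanSpace ℝ (Fin n)))
    (x y : EuclideanSpace ℝ (Fin n)) : ℝ :=
  Real.log (1 + dist x y / min (distBd G x) (distBd G y))

/-- The quantity `p_G(x,y) = |x-y| / √(|x-y|² + 4 d_G(x) d_G(y))`. -/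
noncomputable def pMetric {n : ℕ} (G : Set (EuclideanSpace ℝ (Fin n)))
    (x y : EuclideanSpace ℝ (Fin n)) : ℝ :=
  dist x y / Real.sqrt (dist x y ^ 2 + 4 * distBd G x * distBd G y)

/-- For a proper subdomain `G ⊊ ℝⁿ`, `z ∈ G` with `d(z) = dist(z,∂G) > 0`, `0 < λ < 1`,
and all `x, y ∈ 𝔹ⁿ(z, λ d(z))`: `j_G(x,y) ≤ (2/(1-λ)) · p_G(x,y)`. -/
theorem jG_le_mul_pG {n : ℕ}
    (G : Set (EuclideanSpace ℝ (Fin n)))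
    (hGopen : IsOpen G) (hGconn : IsConnected G) (hGproper : G ≠ univ)
    (z : EuclideanSpace ℝ (Fin n)) (hz : z ∈ G)
    (hd : 0 < Metric.infDist z (frontier G))
    (lam : ℝ) (hlam0 : 0 < lam) (hlam1 : lam < 1)
    (x y : EuclideanSpace ℝ (Fin n))
    (hx : x ∈ Metric.ball z (lam * Metric.infDist z (frontier G)))
    (hy : y ∈ Metric.ball z (lam * Metric.infDist z (frontier G))) :
    distRatio G x y ≤ (2 / (1 - lam)) * pMetric G x y := by
  have h1l : (0:ℝ) < 1 - lam := by linarith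
  set F := frontier G with hF
  set dz := Metric.infDist z F with hdz
  set dx := distBd G x with hdxdef
  set dy := distBd G y with hdydef
  set r := dist x y with hrdef
  have hxz : dist x z < lam * dz := mem_ball.mp hx
  have hyz : dist y z < lam * dz := mem_ball.mp hy
  have hdxl : dz - dist x z ≤ dx := by
    have h := Metric.infDist_le_infDist_add_dist (x := z) (y := x) (s := F)
    rw [dist_comm z x] at h
    simp only [hdxdef, distBd, ← hF] at *
    linarith
  have hdyl : dz - dist y z ≤ dy := by
    have h := Metric.infDist_le_infDist_add_dist (x := z) (y := y) (s := F)
    rw [dist_comm z y] at h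
    simp only [hdydef, distBd, ← hF] at *
    linarith
  have hdxlam : (1 - lam) * dz < dx := by nlinarith
  have hdylam : (1 - lam) * dz < dy := by nlinarith
  set m := min dx dy with hm
  have hmlam : (1 - lam) * dz < m := lt_min hdxlam hdylam
  have hm0 : 0 < m := lt_trans (by positivity) hmlam
  have hr0 : 0 ≤ r := dist_nonneg
  have hrlt : r < 2 * lam * dz := by
    have := dist_triangle x z y
    rw [dist_comm z y] at this
    simp only [← hrdef] at this
    linarith
  -- Lipschitz bounds between dx and dy
  have hdxy : dx ≤ dy + r := by
    have h := Metric.infDist_le_infDist_add_dist (x := x) (y := y) (s := F)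
    rw [dist_comm x y] at h
    simp only [distBd, ← hF, dist_comm] at *
    simpa [hrdef, dist_comm, hdxdef, hdydef, distBd] using h
  have hdyx : dy ≤ dx + r := by
    have h := Metric.infDist_le_infDist_add_dist (x := y) (y := x) (s := F)
    simp only [distBd, ← hF] at *
    simpa [hrdef, dist_comm, hdxdef, hdydef, distBd] using h
  have hdx0 : 0 < dx := lt_trans (by positivity) hdxlam
  have hdy0 : 0 < dy := lt_trans (by positivity) hdylam
  -- product bound: dx * dy ≤ m * (m + r)
  have hprod : dx * dy ≤ m * (m + r) := by
    rcases min_cases dx dy with ⟨he, hle⟩ | ⟨he, hle⟩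
    · rw [hm, he]; nlinarith
    · rw [hm, he]; nlinarith
  -- sqrt bound
  have hrad : r ^ 2 + 4 * dx * dy ≤ (r + 2 * m) ^ 2 := by nlinarith
  have hsqrt : Real.sqrt (r ^ 2 + 4 * dx * dy) ≤ r + 2 * m := by
    have := Real.sqrt_le_sqrt hrad
    rwa [Real.sqrt_sq (by linarith)] at this
  have hsq0 : 0 < Real.sqrt (r ^ 2 + 4 * dx * dy) := Real.sqrt_pos.mpr (by nlinarith)
  -- p ≥ r/(r+2m)
  have hp : r / (r + 2 * m) ≤ pMetric G x y := by
    unfold pMetric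
    simp only [← hdxdef, ← hdydef, ← hrdef]
    exact div_le_div_of_nonneg_left hr0 hsq0 hsqrt
  -- j ≤ r/m
  have hj : distRatio G x y ≤ r / m := by
    unfold distRatio
    simp only [← hdxdef, ← hdydef, ← hrdef, ← hm]
    have h1 : (0:ℝ) < 1 + r / m := by positivity
    have := Real.log_le_sub_one_of_pos h1
    linarith
  -- middle inequality
  have hrm : (0:ℝ) < r + 2 * m := by linarith
  have key : (1 - lam) * r ≤ 2 * lam * m := by
    have h1 := mul_lt_mul_of_pos_left hrlt h1l
    have h2 := mul_lt_mul_of_pos_left hmlam (by positivity : (0:ℝ) < 2 * lam)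
    linarith
  have hmid : r / m ≤ (2 / (1 - lam)) * (r / (r + 2 * m)) := by
    rw [mul_div_assoc', div_le_div_iff₀ hm0 hrm, div_mul_eq_mul_div,
      div_mul_eq_mul_div, le_div_iff₀ h1l]
    have h3 := mul_le_mul_of_nonneg_left key hr0
    linarith [h3]
  calc distRatio G x y ≤ r / m := hj
    _ ≤ (2 / (1 - lam)) * (r / (r + 2 * m)) := hmid
    _ ≤ (2 / (1 - lam)) * pMetric G x y := by
        apply mul_le_mul_of_nonneg_left hp (by positivity)
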